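/- Trail condition for δ-separation: let G = (V,E) be a directed graph and A, B, C ⊆ V pairwise disjoint. Then C δ-separates A from B in G (A ir_δ B | C) if and only if every allowed trail from A to B in G is blocked by C. -/

import Mathlib

open Set

variable {V : Type*}

/-- There is a directed path (a sequence of ≥ 2 distinct vertices joined by
directed edges) from `v` to `w`; i.e. `v` is an ancestor of `w`. -/
def DirPathConn (E : V → V → Prop) (v w : V) : Prop :=
  ∃ l : List V, l.Chain' E ∧ l.Nodup ∧ 2 ≤ l.length ∧
    l.head? = some v ∧ l.getLast? = some w

/-- `an(A)`: vertices outside `A` that are ancestors of some element of `A`. -/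
def anSet (E : V → V → Prop) (A : Set V) : Set V :=
  {v | v ∉ A ∧ ∃ a ∈ A, DirPathConn E v a}

/-- `An(A) = A ∪ an(A)`, the smallest ancestral set containing `A`. -/
def AnSet (E : V → V → Prop) (A : Set V) : Set V := A ∪ anSet E A

/-- `pa(A)`: parents of `A` outside of `A`. -/
def paSet (E : V → V → Prop) (A : Set V) : Set V :=
  {v | v ∉ A ∧ ∃ a ∈ A, E v a}

/-- `cl(A) = A ∪ pa(A)`, the closure of `A`. -/
def clSet (E : V → V → Prop) (A : Set V) : Set V := A ∪ paSet E A

/-- The induced subgraph `G_A` (as an edge relation on `V` supported on `A`). -/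
def inducedGraph (E : V → V → Prop) (A : Set V) : V → V → Prop :=
  fun j k => E j k ∧ j ∈ A ∧ k ∈ A

/-- `G^B`: delete from `G` every directed edge starting in `B`. -/
def delOut (E : V → V → Prop) (B : Set V) : V → V → Prop :=
  fun j k => E j k ∧ j ∉ B

/-- The moral graph `G^m`: distinct `j, k` are adjacent iff they are joined by
an edge in some direction or have a common child. -/
def moralGraph (E : V → V → Prop) : V → V → Prop :=
  fun j k => j ≠ k ∧ (E j k ∨ E k j ∨ ∃ c, E j c ∧ E k c)

/-- `l` is an undirected path from `v` to `w` in the undirected graph `H`: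
a sequence of ≥ 2 distinct vertices, consecutive ones adjacent. -/
def IsUPath (H : V → V → Prop) (l : List V) (v w : V) : Prop :=
  l.Chain' H ∧ l.Nodup ∧ 2 ≤ l.length ∧
    l.head? = some v ∧ l.getLast? = some w

/-- `A ⊥_g B | C` in the undirected graph `H`: every path from a vertex of `A`
to a vertex of `B` contains a vertex of `C`. -/
def uSep (H : V → V → Prop) (A B C : Set V) : Prop :=
  ∀ v ∈ A, ∀ w ∈ B, ∀ l : List V, IsUPath H l v w → ∃ c ∈ C, c ∈ l

/-- δ-separation for pairwise disjoint `A, B, C`: `A ⊥_g B | C` in the moral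
graph of the subgraph of `G^B` induced by `An(A ∪ B ∪ C)`. -/
def deltaSepDisjoint (E : V → V → Prop) (A B C : Set V) : Prop :=
  uSep (moralGraph (inducedGraph (delOut E B) (AnSet E (A ∪ B ∪ C)))) A B C

/-- δ-separation `A ir_δ B | C` for general (not necessarily disjoint) sets:
`C \ B` δ-separates `A \ (B ∪ C)` from `B`. -/
def deltaSep (E : V → V → Prop) (A B C : Set V) : Prop :=
  deltaSepDisjoint E (A \ (B ∪ C)) B (C \ B)

/-- `(n, j, d)` is a trail in `G`: a sequence `j 0, …, j n` of distinct
vertices (`n ≥ 1`) together with, for each `i < n`, an edge between `j i` and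
`j (i+1)` whose direction is recorded by `d i` (`true` means the edge is
`(j i, j (i+1))`, `false` means it is `(j (i+1), j i)`). -/
def IsTrail (E : V → V → Prop) (n : ℕ) (j : ℕ → V) (d : ℕ → Bool) : Prop :=
  1 ≤ n ∧ (∀ a ≤ n, ∀ b ≤ n, j a = j b → a = b) ∧
    ∀ i < n, (d i = true → E (j i) (j (i + 1))) ∧
      (d i = false → E (j (i + 1)) (j i))

/-- The edges of the trail meet head-to-head at the intermediate vertex with
index `i`, i.e. `e_i = (j_{i-1}, j_i)` and `e_{i+1} = (j_{i+1}, j_i)`. -/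
def HeadToHead (d : ℕ → Bool) (i : ℕ) : Prop :=
  d (i - 1) = true ∧ d i = false

/-- The trail `(n, j, d)` is blocked by `C`: it has an intermediate vertex
`j i` such that either the edges do not meet head-to-head at `j i` and
`j i ∈ C`, or they meet head-to-head at `j i` and neither `j i` nor any of its
descendants belongs to `C`. -/
def TrailBlocked (E : V → V → Prop) (n : ℕ) (j : ℕ → V) (d : ℕ → Bool)
    (C : Set V) : Prop :=
  ∃ i, 0 < i ∧ i < n ∧
    ((¬ HeadToHead d i ∧ j i ∈ C) ∨
      (HeadToHead d i ∧ j i ∉ C ∧ ∀ w, DirPathConn E (j i) w → w ∉ C))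

/-- The trail `(n, j, d)` is allowed (w.r.t. `B`): it contains no edge of the
form `(b, k)` with `b ∈ B` and `k ∉ B`. -/
def TrailAllowed (B : Set V) (n : ℕ) (j : ℕ → V) (d : ℕ → Bool) : Prop :=
  ∀ i < n, (d i = true → ¬ (j i ∈ B ∧ j (i + 1) ∉ B)) ∧
    (d i = false → ¬ (j (i + 1) ∈ B ∧ j i ∉ B))

namespace DS

variable {E : V → V → Prop}

lemma transGen_of_chain' {i t : ℕ} {y : ℕ → V} (hit : i < t)
    (h : ∀ s, i ≤ s → s < t → E (y s) (y (s+1))) :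
    Relation.TransGen E (y i) (y t) := by
  induction t, hit using Nat.le_induction with
  | base => exact Relation.TransGen.single (h i le_rfl (Nat.lt_succ_self i))
  | succ t ht ih =>
      exact (ih (fun s hs hs' => h s hs (by omega))).tail
        (h t (by omega) (by omega))

lemma transGen_to_chain {v w : V} (h : Relation.TransGen E v w) :
    ∃ (q : ℕ) (y : ℕ → V), 1 ≤ q ∧ y 0 = v ∧ y q = w ∧
      ∀ r < q, E (y r) (y (r+1)) := by
  induction h with
  | @single b hb =>
      exact ⟨1, fun r => if r = 0 then v else b, le_rfl, by simp, by simp,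
        by intro r hr; interval_cases r; simpa using hb⟩
  | @tail b c hab e ih =>
      obtain ⟨q, y, hq, hy0, hyq, hch⟩ := ih
      refine ⟨q + 1, fun r => if r ≤ q then y r else c, by omega, by simp [hy0], by simp, ?_⟩
      intro r hr
      rcases Nat.lt_or_ge r q with h1 | h1
      · simpa [Nat.le_of_lt h1, Nat.succ_le_of_lt h1] using hch r h1
      · have : r = q := by omega
        subst this
        simpa [hyq] using e

lemma dirPathConn_of_inj {q : ℕ} {y : ℕ → V} (hq : 1 ≤ q)
    (hchain : ∀ r < q, E (y r) (y (r+1)))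
    (hinj : ∀ a ≤ q, ∀ b ≤ q, y a = y b → a = b) :
    DirPathConn E (y 0) (y q) := by
  refine ⟨(List.range (q+1)).map y, ?_, ?_, ?_, ?_, ?_⟩
  · change List.IsChain _ _
    rw [List.isChain_map]
    rw [List.isChain_range_succ]
    exact hchain
  · refine (List.nodup_range (n := q+1)).map_on ?_
    intro a ha b hb hab
    exact hinj a (by simpa using Nat.lt_succ_iff.mp (List.mem_range.mp ha))
      b (by simpa using Nat.lt_succ_iff.mp (List.mem_range.mp hb)) hab
  · simpa using hq
  · rw [List.range_succ_eq_map]; simp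
  · rw [List.range_succ]; simp

lemma dirPathConn_of_chain : ∀ (q : ℕ), ∀ y : ℕ → V, 1 ≤ q →
    (∀ r < q, E (y r) (y (r+1))) → y 0 ≠ y q → DirPathConn E (y 0) (y q) := by
  intro q
  induction q using Nat.strong_induction_on with
  | _ q ih =>
    intro y hq hchain hne
    by_cases hinj : ∀ a ≤ q, ∀ b ≤ q, y a = y b → a = b
    · exact dirPathConn_of_inj hq hchain hinj
    · push_neg at hinj
      obtain ⟨a, ha, b, hb, heq, hab⟩ := hinj
      have key : ∀ r s : ℕ, r < s → s ≤ q → y r = y s →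
          DirPathConn E (y 0) (y q) := by
        intro r s hrs hsq hrseq
        set q' := q - (s - r) with hq'
        set y' : ℕ → V := fun t => if t < r then y t else y (t + (s - r)) with hy'
        have hy'0 : y' 0 = y 0 := by
          by_cases h0 : 0 < r
          · simp [hy', h0]
          · have : r = 0 := by omega
            subst this
            simp only [hy', if_neg (lt_irrefl 0)]
            simpa using hrseq.symm
        have hy'q : y' q' = y q := by
          have h1 : ¬ (q' < r) := by omega
          simp only [hy', if_neg h1]
          congr 1
          omega
        have hq'1 : 1 ≤ q' := by
          rcases Nat.eq_zero_or_pos q' with h0 | h0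
          · exfalso
            have hr0 : r = 0 := by omega
            have hsq' : s = q := by omega
            exact hne (by rw [hr0] at hrseq; rw [hsq'] at hrseq; exact hrseq)
          · exact h0
        have hch' : ∀ t < q', E (y' t) (y' (t+1)) := by
          intro t ht
          rcases Nat.lt_or_ge (t+1) r with h1 | h1
          · simp only [hy', if_pos (by omega : t < r), if_pos h1]
            exact hchain t (by omega)
          · rcases Nat.lt_or_ge t r with h2 | h2
            · -- t + 1 = r
              have : t + 1 = r := by omega
              simp only [hy', if_pos h2, if_neg (by omega : ¬ t + 1 < r)]
              have : y (t + 1 + (s - r)) = y (t+1) := by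
                have : t + 1 + (s - r) = s := by omega
                rw [this, ← hrseq, ← ‹t + 1 = r›]
              rw [this]
              exact hchain t (by omega)
            · simp only [hy', if_neg (by omega : ¬ t < r), if_neg (by omega : ¬ t + 1 < r)]
              have : t + 1 + (s - r) = t + (s - r) + 1 := by omega
              rw [this]
              exact hchain (t + (s - r)) (by omega)
        have := ih q' (by omega) y' hq'1 hch' (by rw [hy'0, hy'q]; exact hne)
        rwa [hy'0, hy'q] at this
      rcases Nat.lt_or_ge a b with h1 | h1
      · exact key a b h1 hb heq
      · exact key b a (by omega) ha heq.symm

lemma dirPathConn_of_transGen {v w : V} (h : Relation.TransGen E v w)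
    (hne : v ≠ w) : DirPathConn E v w := by
  obtain ⟨q, y, hq, h0, hqq, hch⟩ := transGen_to_chain h
  have := dirPathConn_of_chain q y hq hch (by rw [h0, hqq]; exact hne)
  rwa [h0, hqq] at this

lemma transGen_of_dirPathConn {v w : V} (h : DirPathConn E v w) :
    Relation.TransGen E v w := by
  obtain ⟨l, hch, _, hlen, hhd, hlast⟩ := h
  set y : ℕ → V := fun t => l.getD t v with hy
  have hl : 1 ≤ l.length - 1 := by omega
  have h0 : y 0 = v := by
    cases l with
    | nil => simp at hhd
    | cons a t => simp at hhd; simp [hy, hhd]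
  have hq : y (l.length - 1) = w := by
    have h1 : l.length - 1 < l.length := by omega
    have := List.getD_eq_getElem l v h1
    rw [List.getLast?_eq_getElem? , List.getElem?_eq_getElem h1] at hlast
    rw [hy]
    simp only [this]
    exact Option.some.inj hlast
  have hchf : ∀ r < l.length - 1, E (y r) (y (r+1)) := by
    change List.IsChain _ _ at hch
    rw [List.isChain_iff_getElem] at hch
    intro r hr
    have e := hch r (by omega)
    rw [hy]
    simp only [List.getD_eq_getElem l v (by omega : r < l.length),
      List.getD_eq_getElem l v (by omega : r + 1 < l.length)]
    simpa using e
  have := transGen_of_chain' (y := y) (by omega : 0 < l.length - 1)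
    (fun s hs hs' => hchf s hs')
  rwa [h0, hq] at this

lemma upath_to_fun {H : V → V → Prop} {l : List V} {v w : V}
    (h : IsUPath H l v w) :
    ∃ (m : ℕ) (y : ℕ → V), 1 ≤ m ∧ y 0 = v ∧ y m = w ∧
      (∀ t < m, H (y t) (y (t+1))) ∧ (∀ t ≤ m, y t ∈ l) := by
  obtain ⟨hch, _, hlen, hhd, hlast⟩ := h
  refine ⟨l.length - 1, fun t => l.getD t v, by omega, ?_, ?_, ?_, ?_⟩
  · cases l with
    | nil => simp at hhd
    | cons a t => simp at hhd; simp [hhd]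
  · have h1 : l.length - 1 < l.length := by omega
    rw [List.getLast?_eq_getElem?, List.getElem?_eq_getElem h1] at hlast
    simp only [List.getD_eq_getElem l v h1]
    exact Option.some.inj hlast
  · change List.IsChain _ _ at hch
    rw [List.isChain_iff_getElem] at hch
    intro t ht
    have e := hch t (by omega)
    simp only [List.getD_eq_getElem l v (by omega : t < l.length),
      List.getD_eq_getElem l v (by omega : t + 1 < l.length)]
    simpa using e
  · intro t ht
    have h1 : t < l.length := by omega
    simp only [List.getD_eq_getElem l v h1]
    exact List.getElem_mem h1

lemma mem_AnSet_iff {S : Set V} {v : V} :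
    v ∈ AnSet E S ↔ v ∈ S ∨ ∃ s ∈ S, Relation.TransGen E v s := by
  constructor
  · rintro (h | ⟨hv, a, ha, hp⟩)
    · exact Or.inl h
    · exact Or.inr ⟨a, ha, transGen_of_dirPathConn hp⟩
  · rintro (h | ⟨s, hs, hp⟩)
    · exact Or.inl h
    · by_cases hv : v ∈ S
      · exact Or.inl hv
      · exact Or.inr ⟨hv, s, hs, dirPathConn_of_transGen hp
          (fun h => hv (h ▸ hs))⟩

lemma AnSet_mem_of_mem {S : Set V} {v : V} (h : v ∈ S) : v ∈ AnSet E S := Or.inl h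

lemma AnSet_trans {S : Set V} {v w : V} (h : Relation.TransGen E v w)
    (hw : w ∈ AnSet E S) : v ∈ AnSet E S := by
  rw [mem_AnSet_iff] at hw ⊢
  rcases hw with hw | ⟨s, hs, hp⟩
  · exact Or.inr ⟨w, hw, h⟩
  · exact Or.inr ⟨s, hs, h.trans hp⟩

lemma AnSet_edge {S : Set V} {v w : V} (h : E v w) (hw : w ∈ AnSet E S) :
    v ∈ AnSet E S := AnSet_trans (Relation.TransGen.single h) hw

/-- vertices that are in `C` or have a directed path to `C`. -/
def Dset (E : V → V → Prop) (C : Set V) : Set V :=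
  {v | v ∈ C ∨ ∃ c ∈ C, Relation.TransGen E v c}

lemma Dset_trans {C : Set V} {v w : V} (h : Relation.TransGen E v w)
    (hw : w ∈ Dset E C) : v ∈ Dset E C := by
  rcases hw with hw | ⟨c, hc, hp⟩
  · exact Or.inr ⟨w, hw, h⟩
  · exact Or.inr ⟨c, hc, h.trans hp⟩

lemma Dset_subset_AnSet {A B C : Set V} : Dset E C ⊆ AnSet E (A ∪ B ∪ C) := by
  intro v hv
  have hCS : C ⊆ A ∪ B ∪ C := by intro x hx; exact Or.inr hx
  rcases hv with hv | ⟨c, hc, hp⟩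
  · exact AnSet_mem_of_mem (hCS hv)
  · exact AnSet_trans hp (AnSet_mem_of_mem (hCS hc))

/-- walk (no injectivity) -/
def IsWalk (E : V → V → Prop) (n : ℕ) (j : ℕ → V) (d : ℕ → Bool) : Prop :=
  ∀ i < n, (d i = true → E (j i) (j (i + 1))) ∧ (d i = false → E (j (i + 1)) (j i))

/-- every edge has its source outside B -/
def Src (B : Set V) (n : ℕ) (j : ℕ → V) (d : ℕ → Bool) : Prop :=
  ∀ i < n, (d i = true → j i ∉ B) ∧ (d i = false → j (i + 1) ∉ B)

lemma Src.trailAllowed {B : Set V} {n : ℕ} {j : ℕ → V} {d : ℕ → Bool}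
    (h : Src B n j d) : TrailAllowed B n j d := by
  intro i hi
  exact ⟨fun hd hmem => (h i hi).1 hd hmem.1, fun hd hmem => (h i hi).2 hd hmem.1⟩


def StatAt (P Q : Set V) (j : ℕ → V) (d : ℕ → Bool) (i : ℕ) : Prop :=
  (HeadToHead d i → j i ∈ P) ∧ (¬ HeadToHead d i → j i ∉ Q)

/-- vertex function of walk concatenation -/
def appj (n1 : ℕ) (j1 j2 : ℕ → V) : ℕ → V := fun t => if t < n1 then j1 t else j2 (t - n1)
/-- direction function of walk concatenation -/
def appd (n1 : ℕ) (d1 d2 : ℕ → Bool) : ℕ → Bool := fun t => if t < n1 then d1 t else d2 (t - n1)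

lemma appj_left {n1 : ℕ} {j1 j2 : ℕ → V} (hj : j1 n1 = j2 0) {t : ℕ} (ht : t ≤ n1) :
    appj n1 j1 j2 t = j1 t := by
  rcases Nat.lt_or_ge t n1 with h | h
  · simp [appj, h]
  · have : t = n1 := by omega
    subst this
    simp [appj, hj.symm]

lemma appj_right {n1 : ℕ} {j1 j2 : ℕ → V} {t : ℕ} (ht : n1 ≤ t) :
    appj n1 j1 j2 t = j2 (t - n1) := by
  rcases Nat.lt_or_ge t n1 with h | h
  · omega
  · simp [appj, Nat.not_lt.mpr h]

lemma appd_left {n1 : ℕ} {d1 d2 : ℕ → Bool} {t : ℕ} (ht : t < n1) :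
    appd n1 d1 d2 t = d1 t := by simp [appd, ht]

lemma appd_right {n1 : ℕ} {d1 d2 : ℕ → Bool} {t : ℕ} (ht : n1 ≤ t) :
    appd n1 d1 d2 t = d2 (t - n1) := by simp [appd, Nat.not_lt.mpr ht]

lemma hth_append_left {n1 : ℕ} {d1 d2 : ℕ → Bool} {i : ℕ} (h0 : 0 < i) (hi : i < n1) :
    HeadToHead (appd n1 d1 d2) i ↔ HeadToHead d1 i := by
  unfold HeadToHead
  rw [appd_left hi, appd_left (by omega : i - 1 < n1)]

lemma hth_append_right {n1 : ℕ} {d1 d2 : ℕ → Bool} {i : ℕ} (hi : n1 < i) :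
    HeadToHead (appd n1 d1 d2) i ↔ HeadToHead d2 (i - n1) := by
  unfold HeadToHead
  rw [appd_right (by omega : n1 ≤ i), appd_right (by omega : n1 ≤ i - 1)]
  have : i - 1 - n1 = i - n1 - 1 := by omega
  rw [this]

lemma hth_append_mid {n1 : ℕ} {d1 d2 : ℕ → Bool} (h1 : 1 ≤ n1) :
    HeadToHead (appd n1 d1 d2) n1 ↔ (d1 (n1 - 1) = true ∧ d2 0 = false) := by
  unfold HeadToHead
  rw [appd_left (by omega : n1 - 1 < n1), appd_right (le_refl n1), Nat.sub_self]

lemma isWalk_append {n1 n2 : ℕ} {j1 j2 : ℕ → V} {d1 d2 : ℕ → Bool}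
    (h1 : IsWalk E n1 j1 d1) (h2 : IsWalk E n2 j2 d2) (hj : j1 n1 = j2 0) :
    IsWalk E (n1 + n2) (appj n1 j1 j2) (appd n1 d1 d2) := by
  intro i hi
  rcases Nat.lt_or_ge i n1 with h | h
  · rw [appd_left h, appj_left hj (by omega), appj_left hj (by omega)]
    exact h1 i h
  · rw [appd_right h, appj_right h, appj_right (by omega)]
    have : i + 1 - n1 = i - n1 + 1 := by omega
    rw [this]
    exact h2 (i - n1) (by omega)

lemma src_append {B : Set V} {n1 n2 : ℕ} {j1 j2 : ℕ → V} {d1 d2 : ℕ → Bool}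
    (h1 : Src B n1 j1 d1) (h2 : Src B n2 j2 d2) (hj : j1 n1 = j2 0) :
    Src B (n1 + n2) (appj n1 j1 j2) (appd n1 d1 d2) := by
  intro i hi
  rcases Nat.lt_or_ge i n1 with h | h
  · rw [appd_left h, appj_left hj (by omega), appj_left hj (by omega)]
    exact h1 i h
  · rw [appd_right h, appj_right h, appj_right (by omega)]
    have : i + 1 - n1 = i - n1 + 1 := by omega
    rw [this]
    exact h2 (i - n1) (by omega)

lemma stat_append {P Q : Set V} {n1 n2 : ℕ} {j1 j2 : ℕ → V} {d1 d2 : ℕ → Bool}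
    (hn1 : 1 ≤ n1) (hj : j1 n1 = j2 0)
    (h1 : ∀ i, 0 < i → i < n1 → StatAt P Q j1 d1 i)
    (h2 : ∀ i, 0 < i → i < n2 → StatAt P Q j2 d2 i)
    (hmid1 : d1 (n1 - 1) = true ∧ d2 0 = false → j1 n1 ∈ P)
    (hmid2 : ¬ (d1 (n1 - 1) = true ∧ d2 0 = false) → j1 n1 ∉ Q) :
    ∀ i, 0 < i → i < n1 + n2 → StatAt P Q (appj n1 j1 j2) (appd n1 d1 d2) i := by
  intro i h0 hi
  rcases Nat.lt_trichotomy i n1 with h | h | h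
  · constructor
    · intro hth
      rw [appj_left hj (by omega)]
      exact (h1 i h0 h).1 ((hth_append_left h0 h).mp hth)
    · intro hth
      rw [appj_left hj (by omega)]
      exact (h1 i h0 h).2 (fun hh => hth ((hth_append_left h0 h).mpr hh))
  · constructor
    · intro hth
      rw [h] at hth ⊢
      rw [appj_left hj le_rfl]
      exact hmid1 ((hth_append_mid hn1).mp hth)
    · intro hth
      rw [h] at hth ⊢
      rw [appj_left hj le_rfl]
      exact hmid2 (fun hh => hth ((hth_append_mid hn1).mpr hh))
  · constructor
    · intro hth
      rw [appj_right (by omega : n1 ≤ i)]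
      exact (h2 (i - n1) (by omega) (by omega)).1 ((hth_append_right h).mp hth)
    · intro hth
      rw [appj_right (by omega : n1 ≤ i)]
      exact (h2 (i - n1) (by omega) (by omega)).2
        (fun hh => hth ((hth_append_right h).mpr hh))

-- chunk 5 : helpers
lemma isWalk_shift {n p : ℕ} {j : ℕ → V} {d : ℕ → Bool} (h : IsWalk E n j d) :
    IsWalk E (n - p) (fun t => j (t + p)) (fun t => d (t + p)) := by
  intro i hi
  have := h (i + p) (by omega)
  simpa [Nat.add_right_comm] using this

lemma src_shift {B : Set V} {n p : ℕ} {j : ℕ → V} {d : ℕ → Bool} (h : Src B n j d) :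
    Src B (n - p) (fun t => j (t + p)) (fun t => d (t + p)) := by
  intro i hi
  have := h (i + p) (by omega)
  simpa [Nat.add_right_comm] using this

lemma hth_shift {p t : ℕ} {d : ℕ → Bool} (ht : 0 < t) :
    HeadToHead (fun s => d (s + p)) t ↔ HeadToHead d (t + p) := by
  unfold HeadToHead
  show (d (t - 1 + p) = true ∧ d (t + p) = false) ↔ _
  have : t - 1 + p = t + p - 1 := by omega
  rw [this]

lemma stat_shift {P Q : Set V} {n p : ℕ} {j : ℕ → V} {d : ℕ → Bool}
    (h : ∀ i, 0 < i → i < n → StatAt P Q j d i) :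
    ∀ t, 0 < t → t < n - p → StatAt P Q (fun s => j (s + p)) (fun s => d (s + p)) t := by
  intro t h0 ht
  constructor
  · intro hth
    exact (h (t + p) (by omega) (by omega)).1 ((hth_shift h0).mp hth)
  · intro hth
    exact (h (t + p) (by omega) (by omega)).2 (fun hh => hth ((hth_shift h0).mpr hh))

lemma reachS {S : Set V} {w s : V} (h : Relation.TransGen E w s) (hs : s ∈ S)
    (hw : w ∉ S) :
    ∃ (q : ℕ) (y : ℕ → V), 1 ≤ q ∧ y 0 = w ∧ y q ∈ S ∧
      (∀ r < q, E (y r) (y (r+1))) ∧ (∀ r < q, y r ∉ S) := by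
  induction h using Relation.TransGen.head_induction_on with
  | @single a e =>
    exact ⟨1, fun r => if r = 0 then a else s, le_rfl, by simp, by simpa using hs,
      by intro r hr; interval_cases r; simpa using e,
      by intro r hr; interval_cases r; simpa using hw⟩
  | @head a c e h' ih =>
    by_cases hc : c ∈ S
    · exact ⟨1, fun r => if r = 0 then a else c, le_rfl, by simp, by simpa using hc,
        by intro r hr; interval_cases r; simpa using e,
        by intro r hr; interval_cases r; simpa using hw⟩
    · obtain ⟨q, y, hq, hy0, hyq, hch, hns⟩ := ih hc
      refine ⟨q + 1, fun r => if r = 0 then a else y (r - 1), by omega, by simp, ?_, ?_, ?_⟩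
      · simpa using hyq
      · intro r hr
        rcases Nat.eq_zero_or_pos r with h0 | h0
        · subst h0; simpa [hy0] using e
        · have h1 : ¬ (r = 0) := by omega
          have h2 : ¬ (r + 1 = 0) := by omega
          simp only [if_neg h1, if_neg h2]
          have : r + 1 - 1 = r - 1 + 1 := by omega
          rw [this]
          exact hch (r - 1) (by omega)
      · intro r hr
        rcases Nat.eq_zero_or_pos r with h0 | h0
        · subst h0; simpa using hw
        · have h1 : ¬ (r = 0) := by omega
          simp only [if_neg h1]
          exact hns (r - 1) (by omega)

-- chunk 4: Phase A
lemma gadget {B C W : Set V} {x y : V}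
    (hxy : moralGraph (inducedGraph (delOut E B) W) x y) :
    ∃ (n : ℕ) (j : ℕ → V) (d : ℕ → Bool), 1 ≤ n ∧ IsWalk E n j d ∧
      j 0 = x ∧ j n = y ∧ Src B n j d ∧
      (∀ i, 0 < i → i < n → StatAt W C j d i) ∧ x ∈ W ∧ y ∈ W := by
  obtain ⟨hne, hcase⟩ := hxy
  rcases hcase with ⟨⟨hxyE, hxB⟩, hxW, hyW⟩ | ⟨⟨hyxE, hyB⟩, hyW, hxW⟩ |
    ⟨c, ⟨⟨hxcE, hxB⟩, hxW, hcW⟩, ⟨⟨hycE, hyB⟩, hyW, _⟩⟩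
  · refine ⟨1, fun t => if t = 0 then x else y, fun _ => true, le_rfl, ?_, by simp, by simp,
      ?_, ?_, hxW, hyW⟩
    · intro i hi
      interval_cases i
      exact ⟨fun _ => by simpa using hxyE, fun h => by simp at h⟩
    · intro i hi
      interval_cases i
      exact ⟨fun _ => by simpa using hxB, fun h => by simp at h⟩
    · intro i h0 hi; omega
  · refine ⟨1, fun t => if t = 0 then x else y, fun _ => false, le_rfl, ?_, by simp, by simp,
      ?_, ?_, hxW, hyW⟩
    · intro i hi
      interval_cases i
      exact ⟨fun h => by simp at h, fun _ => by simpa using hyxE⟩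
    · intro i hi
      interval_cases i
      exact ⟨fun h => by simp at h, fun _ => by simpa using hyB⟩
    · intro i h0 hi; omega
  · refine ⟨2, fun t => if t = 0 then x else if t = 1 then c else y,
      fun t => decide (t = 0), le_of_lt one_lt_two, ?_, by simp, by simp, ?_, ?_, hxW, hyW⟩
    · intro i hi
      interval_cases i
      · exact ⟨fun _ => by simpa using hxcE, fun h => by simp at h⟩
      · exact ⟨fun h => by simp at h, fun _ => by simpa using hycE⟩
    · intro i hi
      interval_cases i
      · exact ⟨fun _ => by simpa using hxB, fun h => by simp at h⟩
      · exact ⟨fun h => by simp at h, fun _ => by simpa using hyB⟩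
    · intro i h0 hi
      have hi1 : i = 1 := by omega
      subst hi1
      constructor
      · intro _; simpa using hcW
      · intro hth
        exact absurd ⟨by simp [HeadToHead], by simp⟩ hth

lemma phaseA {B C W : Set V} : ∀ (m : ℕ), 1 ≤ m → ∀ v : ℕ → V,
    (∀ t < m, moralGraph (inducedGraph (delOut E B) W) (v t) (v (t+1))) →
    (∀ t ≤ m, v t ∉ C) →
    ∃ (n : ℕ) (j : ℕ → V) (d : ℕ → Bool), 1 ≤ n ∧ IsWalk E n j d ∧
      j 0 = v 0 ∧ j n = v m ∧ Src B n j d ∧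
      (∀ i, 0 < i → i < n → StatAt W C j d i) := by
  intro m hm
  induction m, hm using Nat.le_induction with
  | base =>
    intro v hmoral hC
    obtain ⟨n, j, d, h⟩ := gadget (C := C) (hmoral 0 one_pos)
    exact ⟨n, j, d, h.1, h.2.1, h.2.2.1, h.2.2.2.1, h.2.2.2.2.1, h.2.2.2.2.2.1⟩
  | succ m hm ih =>
    intro v hmoral hC
    obtain ⟨n1, j1, d1, hn1, hw1, hj10, hj1n, hsrc1, hstat1⟩ :=
      ih v (fun t ht => hmoral t (by omega)) (fun t ht => hC t (by omega))
    obtain ⟨n2, j2, d2, hn2, hw2, hj20, hj2n, hsrc2, hstat2, hxW, hyW⟩ :=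
      gadget (C := C) (hmoral m (by omega))
    have hj : j1 n1 = j2 0 := by rw [hj1n, hj20]
    refine ⟨n1 + n2, appj n1 j1 j2, appd n1 d1 d2, by omega,
      isWalk_append hw1 hw2 hj, ?_, ?_, src_append hsrc1 hsrc2 hj, ?_⟩
    · rw [appj_left hj (by omega), hj10]
    · rw [appj_right (by omega : n1 ≤ n1 + n2)]
      simpa using hj2n
    · refine stat_append hn1 hj hstat1 hstat2 ?_ ?_
      · intro _; rw [hj1n]; exact hxW
      · intro _; rw [hj1n]; exact hC m (by omega)

-- chunk 6 : Phase B
noncomputable def badSet (E : V → V → Prop) (C : Set V) (n : ℕ) (j : ℕ → V)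
    (d : ℕ → Bool) : Finset ℕ :=
  @Finset.filter _ (fun i => 0 < i ∧ HeadToHead d i ∧ j i ∉ Dset E C)
    (Classical.decPred _) (Finset.range n)

lemma mem_badSet {C : Set V} {n i : ℕ} {j : ℕ → V} {d : ℕ → Bool} :
    i ∈ badSet E C n j d ↔ i < n ∧ 0 < i ∧ HeadToHead d i ∧ j i ∉ Dset E C := by
  classical
  simp [badSet, Finset.mem_filter, Finset.mem_range, and_assoc]

lemma phaseB {A B C : Set V} :
    ∀ (k n : ℕ) (j : ℕ → V) (d : ℕ → Bool), 1 ≤ n → IsWalk E n j d →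
      j 0 ∈ A → j n ∈ B → Src B n j d →
      (∀ i, 0 < i → i < n → StatAt (AnSet E (A ∪ B ∪ C)) C j d i) →
      (badSet E C n j d).card ≤ k →
      ∃ (n' : ℕ) (j' : ℕ → V) (d' : ℕ → Bool), 1 ≤ n' ∧ IsWalk E n' j' d' ∧
        j' 0 ∈ A ∧ j' n' ∈ B ∧ Src B n' j' d' ∧
        (∀ i, 0 < i → i < n' → StatAt (Dset E C) C j' d' i) := by
  intro k
  induction k with
  | zero =>
    intro n j d hn hw h0 hB hsrc hsemi hcard
    refine ⟨n, j, d, hn, hw, h0, hB, hsrc, ?_⟩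
    intro i hi0 hin
    refine ⟨?_, (hsemi i hi0 hin).2⟩
    intro hth
    by_contra hD
    have hmem : i ∈ badSet E C n j d := mem_badSet.mpr ⟨hin, hi0, hth, hD⟩
    have := Finset.card_pos.mpr ⟨i, hmem⟩
    omega
  | succ k ih =>
    intro n j d hn hw h0 hB hsrc hsemi hcard
    by_cases hne : (badSet E C n j d).Nonempty
    · set p := (badSet E C n j d).min' hne with hpdef
      have hpmem0 : p ∈ badSet E C n j d := (badSet E C n j d).min'_mem hne
      have hpmem := mem_badSet.mp hpmem0
      obtain ⟨hpn, hp0, hpth, hpD⟩ := hpmem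
      have hmin : ∀ i, i ∈ badSet E C n j d → p ≤ i :=
        fun i hi => Finset.min'_le _ i hi
      have hpC : j p ∉ C := fun h => hpD (Or.inl h)
      have hpAn : j p ∈ AnSet E (A ∪ B ∪ C) := (hsemi p hp0 hpn).1 hpth
      by_cases hpB : j p ∈ B
      · -- truncate the walk at p
        refine ih p j d (by omega) (fun i hi => hw i (by omega)) h0 hpB
          (fun i hi => hsrc i (by omega)) (fun i h1 h2 => hsemi i h1 (by omega)) ?_
        have hemp : badSet E C p j d = ∅ := by
          rw [Finset.eq_empty_iff_forall_notMem]
          intro i hi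
          rw [mem_badSet] at hi
          have hio : i ∈ badSet E C n j d :=
            mem_badSet.mpr ⟨by omega, hi.2.1, hi.2.2.1, hi.2.2.2⟩
          have := hmin i hio
          omega
        simp [hemp]
      · by_cases hpA : j p ∈ A
        · -- take the suffix of the walk from p on
          refine ih (n - p) (fun t => j (t + p)) (fun t => d (t + p)) (by omega)
            (isWalk_shift hw) (by simpa using hpA) ?_
            (src_shift hsrc) (stat_shift hsemi) ?_
          · show j (n - p + p) ∈ B
            rw [Nat.sub_add_cancel (le_of_lt hpn)]
            exact hB
          · have hmap : ∀ i ∈ badSet E C (n - p) (fun t => j (t + p)) (fun t => d (t + p)),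
                i + p ∈ (badSet E C n j d).erase p := by
              intro i hi
              rw [mem_badSet] at hi
              obtain ⟨hi1, hi2, hi3, hi4⟩ := hi
              refine Finset.mem_erase.mpr ⟨by omega, mem_badSet.mpr
                ⟨by omega, by omega, (hth_shift hi2).mp hi3, hi4⟩⟩
            have hcle := Finset.card_le_card_of_injOn (fun i => i + p) hmap
              (fun a _ b _ hab => Nat.add_right_cancel hab)
            rw [Finset.card_erase_of_mem hpmem0] at hcle
            omega
        · -- j p is not in A ∪ B ∪ C; it has a directed path to A ∪ B ∪ C
          have hpS : j p ∉ (A ∪ B ∪ C : Set V) := by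
            rintro ((h | h) | h)
            exacts [hpA h, hpB h, hpC h]
          have hex : ∃ s ∈ (A ∪ B ∪ C : Set V), Relation.TransGen E (j p) s := by
            rcases mem_AnSet_iff.mp hpAn with h | h
            · exact absurd h hpS
            · exact h
          obtain ⟨s, hsS, htg⟩ := hex
          obtain ⟨q, y, hq, hy0, hyqS, hych, hynS⟩ := reachS htg hsS hpS
          have hyB : ∀ r < q, y r ∉ B := fun r hr h =>
            hynS r hr (Or.inl (Or.inr h))
          have hyC : ∀ r < q, y r ∉ C := fun r hr h => hynS r hr (Or.inr h)
          rcases hyqS with (hyA | hyB') | hyC'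
          · -- reroute the start of the walk through y q ∈ A
            have hj : (fun r => y (q - r)) q = (fun t => j (t + p)) 0 := by
              simp [hy0]
            have hwalk1 : IsWalk E q (fun r => y (q - r)) (fun _ => false) := by
              intro i hi
              refine ⟨fun h => by simp at h, fun _ => ?_⟩
              show E (y (q - (i + 1))) (y (q - i))
              have heq : q - i = q - (i + 1) + 1 := by omega
              rw [heq]
              exact hych (q - (i + 1)) (by omega)
            have hsrc1 : Src B q (fun r => y (q - r)) (fun _ => false) := by
              intro i hi
              refine ⟨fun h => by simp at h, fun _ => ?_⟩
              exact hyB (q - (i + 1)) (by omega)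
            have hstat1 : ∀ i, 0 < i → i < q →
                StatAt (AnSet E (A ∪ B ∪ C)) C (fun r => y (q - r)) (fun _ => false) i := by
              intro i h1 h2
              refine ⟨fun hth => absurd hth.1 (by simp), fun _ => ?_⟩
              exact hyC (q - i) (by omega)
            refine ih (q + (n - p)) (appj q (fun r => y (q - r)) (fun t => j (t + p)))
              (appd q (fun _ => false) (fun t => d (t + p))) (by omega)
              (isWalk_append hwalk1 (isWalk_shift hw) hj) ?_ ?_
              (src_append hsrc1 (src_shift hsrc) hj)
              (stat_append hq hj hstat1 (stat_shift hsemi)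
                (fun h => absurd h.1 (by simp))
                (fun _ => by simpa [hy0] using hpC)) ?_
            · rw [appj_left (n1 := q) (j1 := fun r => y (q - r))
                (j2 := fun t => j (t + p)) hj (by omega)]
              simpa using hyA
            · rw [appj_right (by omega : q ≤ q + (n - p))]
              have : q + (n - p) - q = n - p := by omega
              rw [this]
              show j (n - p + p) ∈ B
              rw [Nat.sub_add_cancel (le_of_lt hpn)]
              exact hB
            · -- cardinality bound
              have hmap : ∀ i ∈ badSet E C (q + (n - p))
                  (appj q (fun r => y (q - r)) (fun t => j (t + p)))
                  (appd q (fun _ => false) (fun t => d (t + p))),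
                  i - q + p ∈ (badSet E C n j d).erase p := by
                intro i hi
                rw [mem_badSet] at hi
                obtain ⟨hi1, hi2, hi3, hi4⟩ := hi
                have hiq : q < i := by
                  rcases Nat.lt_trichotomy i q with h | h | h
                  · exact absurd ((hth_append_left hi2 h).mp hi3).1 (by simp)
                  · subst h
                    exact absurd ((hth_append_mid hq).mp hi3).1 (by simp)
                  · exact h
                have hth' : HeadToHead d (i - q + p) := by
                  have := (hth_append_right hiq).mp hi3
                  exact (hth_shift (by omega)).mp this
                have hjval : appj q (fun r => y (q - r)) (fun t => j (t + p)) i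
                    = j (i - q + p) := by
                  rw [appj_right (by omega : q ≤ i)]
                refine Finset.mem_erase.mpr ⟨by omega, mem_badSet.mpr
                  ⟨by omega, by omega, hth', by rwa [hjval] at hi4⟩⟩
              have hcle := Finset.card_le_card_of_injOn (fun i => i - q + p) hmap ?_
              · rw [Finset.card_erase_of_mem hpmem0] at hcle
                omega
              · intro a ha b hb hab
                rw [Finset.mem_coe, mem_badSet] at ha hb
                have haq : q < a := by
                  rcases Nat.lt_trichotomy a q with h | h | h
                  · exact absurd ((hth_append_left ha.2.1 h).mp ha.2.2.1).1 (by simp)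
                  · exact absurd ((hth_append_mid hq).mp (h ▸ ha.2.2.1)).1 (by simp)
                  · exact h
                have hbq : q < b := by
                  rcases Nat.lt_trichotomy b q with h | h | h
                  · exact absurd ((hth_append_left hb.2.1 h).mp hb.2.2.1).1 (by simp)
                  · exact absurd ((hth_append_mid hq).mp (h ▸ hb.2.2.1)).1 (by simp)
                  · exact h
                have hab' : a - q + p = b - q + p := hab
                omega
          · -- the path from j p runs into B : reroute the end of the walk
            have hjJ : j p = y 0 := hy0.symm
            have hwalk2 : IsWalk E q y (fun _ => true) := by
              intro i hi
              exact ⟨fun _ => hych i hi, fun h => by simp at h⟩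
            have hsrc2 : Src B q y (fun _ => true) := by
              intro i hi
              exact ⟨fun _ => hyB i hi, fun h => by simp at h⟩
            have hstat2 : ∀ i, 0 < i → i < q →
                StatAt (AnSet E (A ∪ B ∪ C)) C y (fun _ => true) i := by
              intro i h1 h2
              exact ⟨fun hth => absurd hth.2 (by simp), fun _ => hyC i h2⟩
            refine ih (p + q) (appj p j y) (appd p d (fun _ => true)) (by omega)
              (isWalk_append (fun i hi => hw i (by omega)) hwalk2 hjJ) ?_ ?_
              (src_append (fun i hi => hsrc i (by omega)) hsrc2 hjJ)
              (stat_append (by omega) hjJ (fun i h1 h2 => hsemi i h1 (by omega)) hstat2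
                (fun h => absurd h.2 (by simp))
                (fun _ => hpC)) ?_
            · rw [appj_left hjJ (by omega)]
              exact h0
            · rw [appj_right (by omega : p ≤ p + q)]
              have heq : p + q - p = q := by omega
              rw [heq]
              exact hyB'
            · have hemp : badSet E C (p + q) (appj p j y) (appd p d (fun _ => true)) = ∅ := by
                rw [Finset.eq_empty_iff_forall_notMem]
                intro i hi
                rw [mem_badSet] at hi
                obtain ⟨hi1, hi2, hi3, hi4⟩ := hi
                rcases Nat.lt_trichotomy i p with h | h | h
                · have hjv : appj p j y i = j i := appj_left hjJ (by omega)
                  rw [hjv] at hi4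
                  have hmem : i ∈ badSet E C n j d :=
                    mem_badSet.mpr ⟨by omega, hi2, (hth_append_left hi2 h).mp hi3, hi4⟩
                  have := hmin i hmem
                  omega
                · rw [h] at hi3
                  exact absurd ((hth_append_mid (by omega)).mp hi3).2 (by simp)
                · exact absurd ((hth_append_right h).mp hi3).2 (by simp)
              simp [hemp]
          · -- the path runs into C : contradiction with j p ∉ Dset
            exfalso
            apply hpD
            right
            refine ⟨y q, hyC', ?_⟩
            have := transGen_of_chain' (y := y) (by omega : 0 < q)
              (fun r h1 h2 => hych r h2)
            rwa [hy0] at this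
    · refine ih n j d hn hw h0 hB hsrc hsemi ?_
      rw [Finset.not_nonempty_iff_eq_empty] at hne
      simp [hne]

-- chunk 7 : Phase C, walks to trails
lemma phaseC {A B C : Set V} (hAB : Disjoint A B) :
    ∀ (n : ℕ) (j : ℕ → V) (d : ℕ → Bool), 1 ≤ n → IsWalk E n j d →
      j 0 ∈ A → j n ∈ B → Src B n j d →
      (∀ i, 0 < i → i < n → StatAt (Dset E C) C j d i) →
      ∃ (n' : ℕ) (j' : ℕ → V) (d' : ℕ → Bool), 1 ≤ n' ∧ IsWalk E n' j' d' ∧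
        (∀ a ≤ n', ∀ b ≤ n', j' a = j' b → a = b) ∧
        j' 0 ∈ A ∧ j' n' ∈ B ∧ Src B n' j' d' ∧
        (∀ i, 0 < i → i < n' → StatAt (Dset E C) C j' d' i) := by
  intro n
  induction n using Nat.strong_induction_on with
  | _ n IH =>
    intro j d hn hw h0 hB hsrc hstat
    by_cases hinj : ∀ a ≤ n, ∀ b ≤ n, j a = j b → a = b
    · exact ⟨n, j, d, hn, hw, hinj, h0, hB, hsrc, hstat⟩
    push_neg at hinj
    obtain ⟨a, ha, b, hb, heqab, hneab⟩ := hinj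
    -- normalize to i < k
    obtain ⟨i, k, hik, hkn, heq⟩ : ∃ i k, i < k ∧ k ≤ n ∧ j i = j k := by
      rcases Nat.lt_trichotomy a b with h | h | h
      · exact ⟨a, b, h, hb, heqab⟩
      · exact absurd h hneab
      · exact ⟨b, a, h, ha, heqab.symm⟩
    set m := k - i with hm
    have hm1 : 1 ≤ m := by omega
    set n' := n - m with hn'
    set j' : ℕ → V := fun t => if t < i then j t else j (t + m) with hj'
    set d' : ℕ → Bool := fun t => if t < i then d t else d (t + m) with hd'
    have hn'1 : 1 ≤ n' := by
      rcases Nat.eq_zero_or_pos n' with h0' | h0'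
      · exfalso
        have hi0 : i = 0 := by omega
        have hkn' : k = n := by omega
        have : j 0 ∈ B := by
          rw [show j 0 = j n by rw [← hi0, ← hkn']; exact heq]
          exact hB
        exact (disjoint_left.mp hAB h0) this
      · exact h0'
    have hj'le : ∀ t ≤ i, j' t = j t := by
      intro t ht
      rcases Nat.lt_or_ge t i with h | h
      · simp [hj', h]
      · have hti : t = i := by omega
        subst hti
        simp only [hj', if_neg (lt_irrefl t)]
        rw [show t + m = k by omega, ← heq]
    have hj'ge : ∀ t, i ≤ t → j' t = j (t + m) := by
      intro t ht
      rcases Nat.lt_or_ge t i with h | h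
      · omega
      · simp [hj', Nat.not_lt.mpr h]
    have hd'lt : ∀ t, t < i → d' t = d t := by intro t ht; simp [hd', ht]
    have hd'ge : ∀ t, i ≤ t → d' t = d (t + m) := by
      intro t ht; simp [hd', Nat.not_lt.mpr ht]
    have hkm : i + m = k := by omega
    have hwalk' : IsWalk E n' j' d' := by
      intro t ht
      rcases Nat.lt_or_ge t i with h | h
      · rw [hd'lt t h, hj'le t (by omega), hj'le (t+1) (by omega)]
        exact hw t (by omega)
      · rw [hd'ge t h, hj'ge t h, hj'ge (t+1) (by omega),
          show t + 1 + m = t + m + 1 by omega]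
        exact hw (t + m) (by omega)
    have hsrc' : Src B n' j' d' := by
      intro t ht
      rcases Nat.lt_or_ge t i with h | h
      · rw [hd'lt t h, hj'le t (by omega), hj'le (t+1) (by omega)]
        exact hsrc t (by omega)
      · rw [hd'ge t h, hj'ge t h, hj'ge (t+1) (by omega),
          show t + 1 + m = t + m + 1 by omega]
        exact hsrc (t + m) (by omega)
    have h0' : j' 0 ∈ A := by rw [hj'le 0 (by omega)]; exact h0
    have hB' : j' n' ∈ B := by
      rw [hj'ge n' (by omega), show n' + m = n by omega]
      exact hB
    have hstat' : ∀ t, 0 < t → t < n' → StatAt (Dset E C) C j' d' t := by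
      intro t h0t htn
      rcases Nat.lt_trichotomy t i with h | h | h
      · have hth : HeadToHead d' t ↔ HeadToHead d t := by
          unfold HeadToHead
          rw [hd'lt t h, hd'lt (t-1) (by omega)]
        have := hstat t h0t (by omega)
        refine ⟨fun hh => ?_, fun hh => ?_⟩
        · rw [hj'le t (by omega)]
          exact this.1 (hth.mp hh)
        · rw [hj'le t (by omega)]
          exact this.2 (fun z => hh (hth.mpr z))
      · -- junction
        have hkn2 : k < n := by omega
        have hji : j' t = j i := by rw [hj'le t (by omega), h]
        have hthj : HeadToHead d' t ↔ (d (i-1) = true ∧ d k = false) := by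
          unfold HeadToHead
          rw [h, hd'lt (i-1) (by omega), hd'ge i le_rfl, hkm]
        refine ⟨fun hh => ?_, fun hh => ?_⟩
        · rw [hji]
          obtain ⟨hd1, hdk⟩ := hthj.mp hh
          rcases Bool.eq_false_or_eq_true (d i) with hdi | hdi
          · -- d i = true
            rcases Bool.eq_false_or_eq_true (d (k-1)) with hdk1 | hdk1
            · -- original collider at k
              have : j k ∈ Dset E C := (hstat k (by omega) hkn2).1 ⟨hdk1, hdk⟩
              rwa [heq]
            · -- chain from i to the first collider after i
              have hexP : ∃ t0, i < t0 ∧ t0 < k ∧ HeadToHead d t0 := by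
                by_contra hno
                push_neg at hno
                have hprop : ∀ s, i ≤ s → s < k → d s = true := by
                  intro s hs
                  induction s, hs using Nat.le_induction with
                  | base => intro _; exact hdi
                  | succ s hs ihs =>
                    intro hsk
                    have hds := ihs (by omega)
                    rcases Bool.eq_false_or_eq_true (d (s+1)) with h1 | h1
                    · exact h1
                    · exact absurd ⟨hds, h1⟩ (hno (s+1) (by omega) (by omega))
                have := hprop (k-1) (by omega) (by omega)
                simp [this] at hdk1
              classical
              set t1 := Nat.find hexP with ht1
              obtain ⟨ht1i, ht1k, ht1h⟩ := Nat.find_spec hexP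
              have hchain : ∀ s, i ≤ s → s < t1 → d s = true := by
                intro s hs
                induction s, hs using Nat.le_induction with
                | base => intro _; exact hdi
                | succ s hs ihs =>
                  intro hst
                  have hds := ihs (by omega)
                  rcases Bool.eq_false_or_eq_true (d (s+1)) with h1 | h1
                  · exact h1
                  · exact absurd ⟨by omega, by omega, hds, h1⟩
                      (Nat.find_min hexP (by omega : s + 1 < t1))
              have htg : Relation.TransGen E (j i) (j t1) :=
                transGen_of_chain' (by omega : i < t1)
                  (fun s hs hs' => (hw s (by omega)).1 (hchain s hs hs'))
              exact Dset_trans htg ((hstat t1 (by omega) (by omega)).1 ht1h)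
          · -- d i = false : original collider at i
            exact (hstat i (by omega) (by omega)).1 ⟨hd1, hdi⟩
        · rw [hji]
          have hnj : ¬ (d (i-1) = true ∧ d k = false) := fun z => hh (hthj.mpr z)
          rcases Bool.eq_false_or_eq_true (d (i-1)) with hd1 | hd1
          · have hdk : d k = true := by
              rcases Bool.eq_false_or_eq_true (d k) with h1 | h1
              · exact h1
              · exact absurd ⟨hd1, h1⟩ hnj
            have hkc : j k ∉ C := (hstat k (by omega) hkn2).2
              (fun z => by rw [z.2] at hdk; simp at hdk)
            rwa [heq]
          · exact (hstat i (by omega) (by omega)).2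
              (fun z => by rw [z.1] at hd1; simp at hd1)
      · have hth : HeadToHead d' t ↔ HeadToHead d (t + m) := by
          unfold HeadToHead
          rw [hd'ge t (by omega), hd'ge (t-1) (by omega),
            show t - 1 + m = t + m - 1 by omega]
        have := hstat (t + m) (by omega) (by omega)
        refine ⟨fun hh => ?_, fun hh => ?_⟩
        · rw [hj'ge t (by omega)]
          exact this.1 (hth.mp hh)
        · rw [hj'ge t (by omega)]
          exact this.2 (fun z => hh (hth.mpr z))
    exact IH n' (by omega) j' d' hn'1 hwalk' h0' hB' hsrc' hstat'

-- chunk 8: direction 1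
lemma direction1 {A B C : Set V} (hAB : Disjoint A B) (hAC : Disjoint A C)
    (hBC : Disjoint B C)
    (hsep : uSep (moralGraph (inducedGraph (delOut E B) (AnSet E (A ∪ B ∪ C)))) A B C)
    {n : ℕ} {j : ℕ → V} {d : ℕ → Bool} (htr : IsTrail E n j d)
    (h0 : j 0 ∈ A) (hB : j n ∈ B) (hall : TrailAllowed B n j d)
    (hacts : ∀ i, 0 < i → i < n → StatAt (Dset E C) C j d i) : False := by
  classical
  obtain ⟨hn, hinj, hw⟩ := htr
  -- the first index whose vertex lies in B
  have hexm : ∃ i, j i ∈ B ∧ i ≤ n := ⟨n, hB, le_rfl⟩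
  set m := Nat.find hexm with hmdef
  obtain ⟨hmB, hmn⟩ : j m ∈ B ∧ m ≤ n := Nat.find_spec hexm
  have hminB : ∀ i < m, j i ∉ B := by
    intro i hi hiB
    exact Nat.find_min hexm hi ⟨hiB, by omega⟩
  have hm1 : 1 ≤ m := by
    rcases Nat.eq_zero_or_pos m with h | h
    · exact absurd (h ▸ hmB) (disjoint_left.mp hAB h0)
    · exact h
  set AnS := AnSet E (A ∪ B ∪ C) with hAnS
  have hmemA : ∀ i < m, j i ∉ B := hminB
  -- every vertex of the truncated trail lies in the ancestral set
  have hnotB0 : ∀ i ≤ m, i ≠ m → j i ∉ B := fun i hi hne => hminB i (by omega)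
  have allAn : ∀ i, i ≤ m → j i ∈ AnS := by
    intro i
    induction i using Nat.strong_induction_on with
    | _ i ih =>
      intro him
      by_cases hieq : i = m
      · exact AnSet_mem_of_mem (by subst hieq; exact Or.inl (Or.inr hmB))
      have hilt : i < m := by omega
      rcases Bool.eq_false_or_eq_true (d i) with hdi | hdi
      · -- rightwards chain
        have hexT : ∃ t, i < t ∧ t ≤ m ∧ (t = m ∨ d t = false) :=
          ⟨m, by omega, le_rfl, Or.inl rfl⟩
        set t1 := Nat.find hexT with ht1def
        obtain ⟨ht1i, ht1m, hcase⟩ := Nat.find_spec hexT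
        have hchain : ∀ s, i ≤ s → s < t1 → d s = true := by
          intro s hs
          induction s, hs using Nat.le_induction with
          | base => intro _; exact hdi
          | succ s hs ihs =>
            intro hst
            rcases Bool.eq_false_or_eq_true (d (s+1)) with h1 | h1
            · exact h1
            · exfalso
              exact Nat.find_min hexT (by omega : s + 1 < t1)
                ⟨by omega, by omega, Or.inr h1⟩
        have htg : Relation.TransGen E (j i) (j t1) :=
          transGen_of_chain' ht1i
            (fun s hs hs' => (hw s (by omega)).1 (hchain s hs hs'))
        apply AnSet_trans htg
        by_cases ht1m' : t1 = m
        · exact AnSet_mem_of_mem (by rw [ht1m']; exact Or.inl (Or.inr hmB))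
        · have hdt1 : d t1 = false := by
            rcases hcase with h | h
            · exact absurd h ht1m'
            · exact h
          have hth : HeadToHead d t1 :=
            ⟨hchain (t1 - 1) (by omega) (by omega), hdt1⟩
          exact Dset_subset_AnSet ((hacts t1 (by omega) (by omega)).1 hth)
      · -- d i = false
        rcases Nat.eq_zero_or_pos i with h0i | h0i
        · exact AnSet_mem_of_mem (by subst h0i; exact Or.inl (Or.inl h0))
        rcases Bool.eq_false_or_eq_true (d (i - 1)) with hdi1 | hdi1
        · -- head-to-head at i
          exact Dset_subset_AnSet ((hacts i h0i (by omega)).1 ⟨hdi1, hdi⟩)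
        · -- edge from j i to j (i-1)
          have hedge : E (j i) (j (i-1)) := by
            have := (hw (i-1) (by omega)).2 hdi1
            rwa [show i - 1 + 1 = i by omega] at this
          exact AnSet_edge hedge (ih (i-1) (by omega) (by omega))
  -- skip predicate : head-to-head colliders in C are dropped
  set skip : ℕ → Prop := fun i => 0 < i ∧ i < m ∧ HeadToHead d i ∧ j i ∈ C
    with hskipdef
  have hskipm : ∀ i, skip i → i + 1 < m := by
    intro i ⟨h1, h2, hth, hC⟩
    by_contra hge
    have him : i + 1 = m := by omega
    have : ¬ (j (i+1) ∈ B ∧ j i ∉ B) := (hall i (by omega)).2 hth.2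
    exact this ⟨by rw [him]; exact hmB, fun hB' => disjoint_left.mp hBC hB' hC⟩
  have hsrcB : ∀ i, i < m → j i ∉ B := hminB
  -- kept consecutive vertices are adjacent in the moral graph
  have hmoral1 : ∀ i, i < m →
      moralGraph (inducedGraph (delOut E B) AnS) (j i) (j (i+1)) := by
    intro i him
    refine ⟨fun hjj => by have := hinj i (by omega) (i+1) (by omega) hjj; omega, ?_⟩
    rcases Bool.eq_false_or_eq_true (d i) with hdi | hdi
    · exact Or.inl ⟨⟨(hw i (by omega)).1 hdi, hsrcB i him⟩,
        allAn i (by omega), allAn (i+1) (by omega)⟩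
    · refine Or.inr (Or.inl ⟨⟨(hw i (by omega)).2 hdi, ?_⟩,
        allAn (i+1) (by omega), allAn i (by omega)⟩)
      by_cases him1 : i + 1 = m
      · exact absurd ⟨by rw [him1]; exact hmB, hsrcB i him⟩ ((hall i (by omega)).2 hdi)
      · exact hsrcB (i+1) (by omega)
  have hmoralskip : ∀ i, skip (i+1) →
      moralGraph (inducedGraph (delOut E B) AnS) (j i) (j (i+2)) := by
    intro i hs
    have him2 : i + 2 < m := hskipm (i+1) hs
    obtain ⟨_, him, hth, hC⟩ := hs
    have hd1 : d i = true := by simpa using hth.1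
    have hd2 : d (i+1) = false := hth.2
    refine ⟨fun hjj => by have := hinj i (by omega) (i+2) (by omega) hjj; omega,
      Or.inr (Or.inr ⟨j (i+1), ⟨⟨(hw i (by omega)).1 hd1, hsrcB i (by omega)⟩,
        allAn i (by omega), allAn (i+1) (by omega)⟩,
        ⟨⟨(hw (i+1) (by omega)).2 hd2, hsrcB (i+2) (by omega)⟩,
        allAn (i+2) (by omega), allAn (i+1) (by omega)⟩⟩)⟩
  -- the sequence of kept indices
  set next : ℕ → ℕ := fun i => if skip (i+1) then i + 2 else i + 1 with hnextdef
  have hnext_mono : ∀ i, i < next i := by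
    intro i
    show i < if skip (i+1) then i + 2 else i + 1
    by_cases h : skip (i+1)
    · rw [if_pos h]; omega
    · rw [if_neg h]; omega
  have hnext_le : ∀ i, i < m → next i ≤ m := by
    intro i hi
    show (if skip (i+1) then i + 2 else i + 1) ≤ m
    by_cases h : skip (i+1)
    · rw [if_pos h]
      have := hskipm (i+1) h
      omega
    · rw [if_neg h]
      omega
  have hnoskip_next : ∀ i, ¬ skip (next i) := by
    intro i
    show ¬ skip (if skip (i+1) then i + 2 else i + 1)
    by_cases h : skip (i+1)
    · rw [if_pos h]
      intro hs
      have h1 : d (i+1) = false := h.2.2.1.2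
      have h2 : d (i+1) = true := by simpa using hs.2.2.1.1
      rw [h1] at h2
      simp at h2
    · rw [if_neg h]
      exact h
  set idx : ℕ → ℕ := fun r => Nat.rec 0 (fun _ p => next p) r with hidxdef
  have hidx0 : idx 0 = 0 := rfl
  have hidxs : ∀ r, idx (r+1) = next (idx r) := fun r => rfl
  have hmono : StrictMono idx :=
    strictMono_nat_of_lt_succ (fun r => by rw [hidxs]; exact hnext_mono (idx r))
  have hexR : ∃ r, idx r = m := by
    have aux : ∀ k r, idx r ≤ m → m - idx r ≤ k → ∃ r', idx r' = m := by
      intro k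
      induction k with
      | zero => intro r h1 h2; exact ⟨r, by omega⟩
      | succ k ihk =>
        intro r h1 h2
        by_cases heq : idx r = m
        · exact ⟨r, heq⟩
        · have hlt : idx r < m := by omega
          have h3 : idx (r+1) ≤ m := by rw [hidxs]; exact hnext_le _ hlt
          have h4 : idx r < idx (r+1) := hmono (Nat.lt_succ_self r)
          have h5 : m - idx (r+1) ≤ k := by omega
          exact ihk (r+1) h3 h5
    exact aux m 0 (by rw [hidx0]; omega) (by rw [hidx0]; omega)
  set R := Nat.find hexR with hRdef
  have hRm : idx R = m := Nat.find_spec hexR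
  have hRmin : ∀ r < R, idx r ≠ m := fun r hr => Nat.find_min hexR hr
  have hidx_le : ∀ r, r ≤ R → idx r ≤ m := by
    intro r
    induction r with
    | zero => intro _; rw [hidx0]; omega
    | succ r ihr =>
      intro hr
      have h1 : idx r ≤ m := ihr (by omega)
      have h2 : idx r ≠ m := hRmin r (by omega)
      rw [hidxs]
      exact hnext_le _ (by omega)
  have hR1 : 1 ≤ R := by
    rcases Nat.eq_zero_or_pos R with h | h
    · rw [h, hidx0] at hRm; omega
    · exact h
  -- the path in the moral graph
  have hup : IsUPath (moralGraph (inducedGraph (delOut E B) AnS))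
      ((List.range (R+1)).map (fun r => j (idx r))) (j 0) (j m) := by
    refine ⟨?_, ?_, ?_, ?_, ?_⟩
    · change List.IsChain _ _
      rw [List.isChain_map, List.isChain_range_succ]
      intro r hr
      rw [hidxs]
      have h1 : idx r ≤ m := hidx_le r (by omega)
      have h2 : idx r ≠ m := hRmin r hr
      have h3 : idx r < m := by omega
      by_cases hs : skip (idx r + 1)
      · have hnv : next (idx r) = idx r + 2 := by
          show (if skip (idx r + 1) then idx r + 2 else idx r + 1) = _
          rw [if_pos hs]
        rw [hnv]
        exact hmoralskip (idx r) hs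
      · have hnv : next (idx r) = idx r + 1 := by
          show (if skip (idx r + 1) then idx r + 2 else idx r + 1) = _
          rw [if_neg hs]
        rw [hnv]
        exact hmoral1 (idx r) h3
    · refine (List.nodup_range (n := R+1)).map_on ?_
      intro a ha b hb hab
      have ha' : a ≤ R := by have := List.mem_range.mp ha; omega
      have hb' : b ≤ R := by have := List.mem_range.mp hb; omega
      have := hinj (idx a) (by have := hidx_le a ha'; omega)
        (idx b) (by have := hidx_le b hb'; omega) hab
      exact hmono.injective this
    · have hlen : ((List.range (R+1)).map (fun r => j (idx r))).length = R + 1 := by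
        simp
      omega
    · rw [List.range_succ_eq_map]
      simp [hidx0]
    · rw [List.range_succ]
      simp [hRm]

  obtain ⟨c, hcC, hcL⟩ := hsep (j 0) h0 (j m) hmB
    ((List.range (R+1)).map (fun r => j (idx r))) hup
  rw [List.mem_map] at hcL
  obtain ⟨r, hrmem, hrc⟩ := hcL
  have hrR : r ≤ R := by
    have := List.mem_range.mp hrmem
    omega
  rcases Nat.eq_zero_or_pos r with hr0 | hr0
  · subst hr0
    rw [hidx0] at hrc
    exact disjoint_left.mp hAC (hrc ▸ h0) hcC
  by_cases hrR' : r = R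
  · subst hrR'
    rw [hRm] at hrc
    exact disjoint_left.mp hBC (hrc ▸ hmB) hcC
  have hi0 : 0 < idx r := by
    have := hmono hr0
    rw [hidx0] at this
    omega
  have him : idx r < m := by
    have h1 := hidx_le r hrR
    have h2 := hRmin r (by omega)
    omega
  have hns : ¬ skip (idx r) := by
    have : idx r = next (idx (r-1)) := by
      rw [← hidxs, show r - 1 + 1 = r by omega]
    rw [this]
    exact hnoskip_next _
  have hnth : ¬ HeadToHead d (idx r) := by
    intro hth
    exact hns ⟨hi0, him, hth, hrc ▸ hcC⟩
  exact (hacts (idx r) hi0 (by omega)).2 hnth (hrc ▸ hcC)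

end DS

/-- Trail condition for δ-separation: for pairwise disjoint `A, B, C`,
`C` δ-separates `A` from `B` iff every allowed trail from `A` to `B` is
blocked by `C`. -/
theorem deltaSep_iff_trails_blocked [Fintype V] (E : V → V → Prop)
    (hE : ∀ j k, E j k → j ≠ k) (A B C : Set V)
    (hAB : Disjoint A B) (hAC : Disjoint A C) (hBC : Disjoint B C) :
    deltaSep E A B C ↔
      ∀ (n : ℕ) (j : ℕ → V) (d : ℕ → Bool), IsTrail E n j d →
        j 0 ∈ A → j n ∈ B → TrailAllowed B n j d →
          TrailBlocked E n j d C := by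
  classical
  have hA' : A \ (B ∪ C) = A :=
    (Set.disjoint_union_right.mpr ⟨hAB, hAC⟩).sdiff_eq_left
  have hC' : C \ B = C := hBC.symm.sdiff_eq_left
  have hds : deltaSep E A B C ↔
      uSep (moralGraph (inducedGraph (delOut E B) (AnSet E (A ∪ B ∪ C)))) A B C := by
    unfold deltaSep deltaSepDisjoint
    rw [hA', hC']
  constructor
  · intro hsep n j d htr h0 hB hall
    by_contra hnb
    have hacts : ∀ i, 0 < i → i < n → DS.StatAt (DS.Dset E C) C j d i := by
      intro i h0i hin
      constructor
      · intro hth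
        by_contra hD
        apply hnb
        refine ⟨i, h0i, hin, Or.inr ⟨hth, ?_, ?_⟩⟩
        · intro hC2
          exact hD (Or.inl hC2)
        · intro w hp hwC
          exact hD (Or.inr ⟨w, hwC, DS.transGen_of_dirPathConn hp⟩)
      · intro hth hC2
        exact hnb ⟨i, h0i, hin, Or.inl ⟨hth, hC2⟩⟩
    exact DS.direction1 hAB hAC hBC (hds.mp hsep) htr h0 hB hall hacts
  · intro htrails
    rw [hds]
    intro v hv w hw l hl
    by_contra hnc
    push_neg at hnc
    obtain ⟨m, y, hm, hy0, hym, hmoral, hmem⟩ := DS.upath_to_fun hl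
    have hyC : ∀ t ≤ m, y t ∉ C := fun t ht hC2 => hnc (y t) hC2 (hmem t ht)
    obtain ⟨n1, j1, d1, hn1, hw1, hj10, hj1n, hsrc1, hsemi1⟩ :=
      DS.phaseA m hm y hmoral hyC
    obtain ⟨n2, j2, d2, hn2, hw2, h20, h2B, hsrc2, hstat2⟩ :=
      DS.phaseB (DS.badSet E C n1 j1 d1).card n1 j1 d1 hn1 hw1
        (by rw [hj10, hy0]; exact hv) (by rw [hj1n, hym]; exact hw)
        hsrc1 hsemi1 le_rfl
    obtain ⟨n3, j3, d3, hn3, hw3, hinj3, h30, h3B, hsrc3, hstat3⟩ :=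
      DS.phaseC hAB n2 j2 d2 hn2 hw2 h20 h2B hsrc2 hstat2
    have hblocked := htrails n3 j3 d3 ⟨hn3, hinj3, hw3⟩ h30 h3B
      (DS.Src.trailAllowed hsrc3)
    obtain ⟨i, h0i, hin, hcase⟩ := hblocked
    rcases hcase with ⟨hnth, hiC⟩ | ⟨hth, hiC, hdesc⟩
    · exact (hstat3 i h0i hin).2 hnth hiC
    · rcases (hstat3 i h0i hin).1 hth with hmem2 | ⟨c, hcC, htg⟩
      · exact hiC hmem2
      · exact hdesc c (DS.dirPathConn_of_transGen htg (fun he => hiC (he ▸ hcC))) hcC
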